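/- With the notation of the recursive semi-global success probability p_j (monotone setting: p_{j-2}(δ₁,δ₂) is non-increasing in each of δ₁, δ₂, and Δ(ε,δ) is monotone non-decreasing in ε with Δ(ε,δ) ≤ 1 and Δ(ε,1) ∈ {values ≥ 0}), let P_L = P(E < ε*(1,1)). If additionally Δ(ε,1) = 0 whenever ε < ε*(1,1) is assumed as the decoding-success dichotomy (the helper either fully succeeds, outputting 0, or one uses the trivial bound 1), then p_j(1,1) ≥ P_L²·p_{j-2}(0,0) + 2·P_L·(1-P_L)·p_{j-2}(1,0) + (1-P_L)²·p_{j-2}(1,1), where by symmetry p_{j-2}(1,0) = p_{j-2}(0,1). -/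

import Mathlib

open MeasureTheory

/-- Proposition 1, inequality (38): with `p j` non-increasing
in each incoming erasure-rate vector, `Δ` monotone in the channel parameter,
`Δ ε δ ≤ 1`, and the success dichotomy `Δ ε 1 = 0` whenever `ε < εstar 1 1`,
the balanced semi-global success probability satisfies
`p (j+2) 1 1 ≥ P_L²·p j 0 0 + 2·P_L·(1-P_L)·p j 1 0 + (1-P_L)²·p j 1 1`
where `P_L = P(E < εstar 1 1)` and, by symmetry, `p j 1 0 = p j 0 1`. -/
theorem stmt_10 (t : ℕ) (ν : Measure ℝ) [IsProbabilityMeasure ν]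
    (εstar : (Fin t → ℝ) → (Fin t → ℝ) → ℝ)
    (Δ : ℝ → (Fin t → ℝ) → (Fin t → ℝ))
    (p : ℕ → (Fin t → ℝ) → (Fin t → ℝ) → ℝ)
    (hpanti₁ : ∀ j δ₂, Antitone (fun δ₁ => p j δ₁ δ₂))
    (hpanti₂ : ∀ j δ₁, Antitone (p j δ₁))
    (hΔmono : ∀ δ : Fin t → ℝ, Monotone (fun ε => Δ ε δ))
    (hΔle1 : ∀ ε δ, Δ ε δ ≤ 1)
    (hΔsucc : ∀ ε : ℝ, ε < εstar 1 1 → Δ ε 1 = 0)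
    (hprec : ∀ j,
      p (j + 2) 1 1 = ∫ e₁, ∫ e₂, p j (Δ e₁ 1) (Δ e₂ 1) ∂ν ∂ν)
    (hsym : ∀ j, p j 1 0 = p j 0 1)
    (PL : ℝ) (hPL : PL = (ν {x : ℝ | x < εstar 1 1}).toReal)
    (j : ℕ) (hj : Even j) :
    p (j + 2) 1 1 ≥
      PL ^ 2 * p j 0 0 + 2 * PL * (1 - PL) * p j 1 0 +
        (1 - PL) ^ 2 * p j 1 1 := by
  set a := εstar 1 1 with ha
  -- Δ e 1 is always nonnegative
  have hΔ0 : ∀ e : ℝ, (0 : Fin t → ℝ) ≤ Δ e 1 := by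
    intro e
    rcases lt_or_ge e a with h | h
    · rw [hΔsucc e h]
    · have h1 : a - 1 ≤ e := le_trans (le_of_lt (sub_one_lt a)) h
      have h2 : Δ (a - 1) 1 ≤ Δ e 1 := hΔmono 1 h1
      rwa [hΔsucc (a - 1) (sub_one_lt a)] at h2
  set M : ℝ := max |p j 0 0| |p j 1 1| with hM
  have gbound : ∀ e₁ e₂ : ℝ, ‖p j (Δ e₁ 1) (Δ e₂ 1)‖ ≤ M := by
    intro e₁ e₂
    rw [Real.norm_eq_abs, abs_le]
    constructor
    · have h1 : p j 1 1 ≤ p j 1 (Δ e₂ 1) := hpanti₂ j 1 (hΔle1 e₂ 1)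
      have h2 : p j 1 (Δ e₂ 1) ≤ p j (Δ e₁ 1) (Δ e₂ 1) :=
        hpanti₁ j (Δ e₂ 1) (hΔle1 e₁ 1)
      have h3 : -M ≤ p j 1 1 :=
        le_trans (neg_le_neg (le_max_right _ _)) (neg_abs_le _)
      linarith
    · have h1 : p j (Δ e₁ 1) (Δ e₂ 1) ≤ p j 0 (Δ e₂ 1) :=
        hpanti₁ j (Δ e₂ 1) (hΔ0 e₁)
      have h2 : p j 0 (Δ e₂ 1) ≤ p j 0 0 := hpanti₂ j 0 (hΔ0 e₂)
      have h3 : p j 0 0 ≤ M := le_trans (le_abs_self _) (le_max_left _ _)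
      linarith
  -- integrability of the inner integrand
  have intg : ∀ e₁ : ℝ, Integrable (fun e₂ => p j (Δ e₁ 1) (Δ e₂ 1)) ν := by
    intro e₁
    have hanti : Antitone (fun e₂ => p j (Δ e₁ 1) (Δ e₂ 1)) := by
      intro x y hxy
      exact hpanti₂ j (Δ e₁ 1) (hΔmono 1 hxy)
    exact Integrable.mono' (integrable_const M) hanti.measurable.aestronglyMeasurable
      (ae_of_all _ fun e₂ => gbound e₁ e₂)
  -- integral of a step function
  have hSm : MeasurableSet {x : ℝ | x < a} := measurableSet_Iio
  have hif : ∀ c d : ℝ, (fun x : ℝ => if x < a then c else d) =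
      fun x => Set.indicator {x : ℝ | x < a} (fun _ => c - d) x + d := by
    intro c d
    funext x
    by_cases h : x < a
    · simp [Set.indicator, h]
    · simp [Set.indicator, h]
  have hint : ∀ c d : ℝ, Integrable (fun x : ℝ => if x < a then c else d) ν := by
    intro c d
    rw [hif]
    exact (((integrable_const (c - d)).indicator hSm)).add (integrable_const d)
  have hval : ∀ c d : ℝ, ∫ x, (if x < a then c else d) ∂ν = PL * c + (1 - PL) * d := by
    intro c d
    rw [hif, integral_add (((integrable_const (c - d)).indicator hSm)) (integrable_const d),
      integral_indicator_const _ hSm, integral_const]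
    simp only [measureReal_def, measure_univ, ENNReal.toReal_one, one_smul, smul_eq_mul, ← hPL]
    ring
  -- the key pointwise-in-e₁ inequality for the inner integrals
  have key : ∀ e₁ : ℝ,
      (if e₁ < a then PL * p j 0 0 + (1 - PL) * p j 0 1
        else PL * p j 1 0 + (1 - PL) * p j 1 1)
      ≤ ∫ e₂, p j (Δ e₁ 1) (Δ e₂ 1) ∂ν := by
    intro e₁
    rcases lt_or_ge e₁ a with h | h
    · rw [if_pos h, ← hval (p j 0 0) (p j 0 1)]
      refine integral_mono (hint _ _) (intg e₁) fun e₂ => ?_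
      rcases lt_or_ge e₂ a with h2 | h2
      · rw [if_pos h2, hΔsucc e₁ h, hΔsucc e₂ h2]
      · rw [if_neg (not_lt.2 h2), hΔsucc e₁ h]
        exact hpanti₂ j 0 (hΔle1 e₂ 1)
    · rw [if_neg (not_lt.2 h), ← hval (p j 1 0) (p j 1 1)]
      refine integral_mono (hint _ _) (intg e₁) fun e₂ => ?_
      rcases lt_or_ge e₂ a with h2 | h2
      · rw [if_pos h2, hΔsucc e₂ h2]
        exact hpanti₁ j 0 (hΔle1 e₁ 1)
      · rw [if_neg (not_lt.2 h2)]
        exact le_trans (hpanti₂ j 1 (hΔle1 e₂ 1))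
          (hpanti₁ j (Δ e₂ 1) (hΔle1 e₁ 1))
  -- integrability of the outer integrand
  have Gant : Antitone (fun e₁ => ∫ e₂, p j (Δ e₁ 1) (Δ e₂ 1) ∂ν) := by
    intro x y hxy
    refine integral_mono (intg y) (intg x) fun e₂ => ?_
    exact hpanti₁ j (Δ e₂ 1) (hΔmono 1 hxy)
  have Gbound : ∀ e₁ : ℝ, ‖∫ e₂, p j (Δ e₁ 1) (Δ e₂ 1) ∂ν‖ ≤ M := by
    intro e₁
    calc ‖∫ e₂, p j (Δ e₁ 1) (Δ e₂ 1) ∂ν‖ ≤ M * (ν Set.univ).toReal :=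
          norm_integral_le_of_norm_le_const (ae_of_all _ fun e₂ => gbound e₁ e₂)
      _ = M := by simp
  have Gint : Integrable (fun e₁ => ∫ e₂, p j (Δ e₁ 1) (Δ e₂ 1) ∂ν) ν :=
    Integrable.mono' (integrable_const M) Gant.measurable.aestronglyMeasurable
      (ae_of_all _ Gbound)
  have main : ∫ e₁, (if e₁ < a then PL * p j 0 0 + (1 - PL) * p j 0 1
      else PL * p j 1 0 + (1 - PL) * p j 1 1) ∂ν
      ≤ ∫ e₁, ∫ e₂, p j (Δ e₁ 1) (Δ e₂ 1) ∂ν ∂ν :=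
    integral_mono (hint _ _) Gint key
  rw [hval, hsym j] at main
  rw [ge_iff_le, hprec j, hsym j]
  nlinarith [main]
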